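/- Let n ≥ 2 and let W_1,…,W_n be bounded operators on a complex Hilbert space L satisfying the Cuntz relations W_i^* W_j = δ_{ij} I and W_1 W_1^* + ⋯ + W_n W_n^* = I. Let P denote the orthogonal projection of L onto the closed subspace L^c(W). Then the compressed tuple W_i^c = P W_i restricted to L^c(W) is a spherical unitary on L^c(W) (provided L^c(W) ≠ {0}); concretely, for every x ∈ L^c(W): (i) Σ_{i=1}^n P(W_i(W_i^* x)) = x, and (ii) P(W_i(W_i^* x)) = W_i^*(P(W_i x)) for each i (each compression is normal), while the compressions commute with each other. -/

import Mathlib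

open ContinuousLinearMap

noncomputable def wordProd {n : ℕ} {L : Type*} [NormedAddCommGroup L] [InnerProductSpace ℂ L]
    (R : Fin n → L →L[ℂ] L) (α : List (Fin n)) : L →L[ℂ] L :=
  (α.map R).prod

/-- The maximal commuting piece space of a tuple. -/
noncomputable def commPieceSet {n : ℕ} {L : Type*} [NormedAddCommGroup L]
    [InnerProductSpace ℂ L] [CompleteSpace L] (R : Fin n → L →L[ℂ] L) : Set L :=
  {x : L | ∀ (i j : Fin n) (α : List (Fin n)),
    adjoint (R i) (adjoint (R j) (adjoint (wordProd R α) x)) =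
    adjoint (R j) (adjoint (R i) (adjoint (wordProd R α) x))}

set_option linter.unusedSectionVars false
set_option linter.unusedVariables false
set_option linter.unusedTactic false

namespace Stmt12Aux

open Finset Filter Topology

variable {n : ℕ} {L : Type*} [NormedAddCommGroup L] [InnerProductSpace ℂ L] [CompleteSpace L]

local notation "⟪" x ", " y "⟫" => @inner ℂ _ _ x y

lemma wordProd_cons (W : Fin n → L →L[ℂ] L) (a : Fin n) (α : List (Fin n)) :
    wordProd W (a :: α) = (W a).comp (wordProd W α) := by
  simp [wordProd, List.prod_cons, ContinuousLinearMap.mul_def]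

lemma adjoint_wordProd_cons (W : Fin n → L →L[ℂ] L) (a : Fin n) (α : List (Fin n)) (x : L) :
    adjoint (wordProd W α) (adjoint (W a) x) = adjoint (wordProd W (a :: α)) x := by
  rw [wordProd_cons, adjoint_comp]; rfl

lemma adjoint_wordProd_nil (W : Fin n → L →L[ℂ] L) (x : L) :
    adjoint (wordProd W ([] : List (Fin n))) x = x := by
  have h1 : wordProd W ([] : List (Fin n)) = ContinuousLinearMap.id ℂ L := rfl
  rw [h1, adjoint_id]; rfl

variable {W : Fin n → L →L[ℂ] L}

lemma adj_mem {x : L} (hx : x ∈ commPieceSet W) (k : Fin n) :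
    adjoint (W k) x ∈ commPieceSet W := by
  intro i j α
  rw [adjoint_wordProd_cons]
  exact hx i j (k :: α)

lemma comm_adj {x : L} (hx : x ∈ commPieceSet W) (i j : Fin n) :
    adjoint (W i) (adjoint (W j) x) = adjoint (W j) (adjoint (W i) x) := by
  have h := hx i j ([] : List (Fin n))
  rwa [adjoint_wordProd_nil] at h

lemma add_mem_C {x y : L} (hx : x ∈ commPieceSet W) (hy : y ∈ commPieceSet W) :
    x + y ∈ commPieceSet W := by
  intro i j α; simp only [map_add]; rw [hx i j α, hy i j α]

lemma sub_mem_C {x y : L} (hx : x ∈ commPieceSet W) (hy : y ∈ commPieceSet W) :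
    x - y ∈ commPieceSet W := by
  intro i j α; simp only [map_sub]; rw [hx i j α, hy i j α]

lemma smul_mem_C (c : ℂ) {y : L} (hy : y ∈ commPieceSet W) :
    c • y ∈ commPieceSet W := by
  intro i j α; simp only [map_smul]; rw [hy i j α]

section Cuntz

variable (hisom : ∀ i j : Fin n, adjoint (W i) ∘L W j = if i = j then 1 else 0)
variable (hcuntz : ∑ i : Fin n, W i ∘L adjoint (W i) = 1)

include hisom in
lemma adj_apply_W (j k : Fin n) (y : L) :
    adjoint (W j) (W k y) = if j = k then y else 0 := by
  have h := congrArg (fun (f : L →L[ℂ] L) => f y) (hisom j k)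
  simpa [apply_ite (fun (f : L →L[ℂ] L) => f y)] using h

include hcuntz in
lemma cuntz_apply (y : L) : ∑ j, W j (adjoint (W j) y) = y := by
  have h := congrArg (fun (f : L →L[ℂ] L) => f y) hcuntz
  simpa using h

include hcuntz in
lemma inner_cuntz (x y : L) :
    ∑ j, ⟪adjoint (W j) x, adjoint (W j) y⟫ = ⟪x, y⟫ := by
  have h : ∀ j : Fin n, ⟪adjoint (W j) x, adjoint (W j) y⟫ = ⟪x, W j (adjoint (W j) y)⟫ :=
    fun j => adjoint_inner_left (W j) _ _
  rw [Finset.sum_congr rfl fun j _ => h j, ← inner_sum, cuntz_apply hcuntz]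

end Cuntz

noncomputable def gseq (W : Fin n → L →L[ℂ] L) (i : Fin n) : ℕ → L → L
  | 0 => fun y => W i y
  | (m+1) => fun y => ∑ j, W j (gseq W i m (adjoint (W j) y))

lemma gseq_zero (i : Fin n) (y : L) : gseq W i 0 y = W i y := rfl

lemma gseq_succ (i : Fin n) (m : ℕ) (y : L) :
    gseq W i (m+1) y = ∑ j, W j (gseq W i m (adjoint (W j) y)) := rfl

section G

variable (hisom : ∀ i j : Fin n, adjoint (W i) ∘L W j = if i = j then 1 else 0)
variable (hcuntz : ∑ i : Fin n, W i ∘L adjoint (W i) = 1)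

include hisom in
lemma adj_gseq (i k : Fin n) (m : ℕ) (y : L) :
    adjoint (W k) (gseq W i (m+1) y) = gseq W i m (adjoint (W k) y) := by
  rw [gseq_succ, map_sum]
  rw [Finset.sum_congr rfl fun j _ => adj_apply_W hisom k j _]
  simp [Finset.sum_ite_eq]

include hisom hcuntz in
lemma inner_gseq_left (i : Fin n) (m : ℕ) :
    ∀ (v : L), v ∈ commPieceSet W → ∀ y : L, ⟪gseq W i m y, v⟫ = ⟪W i y, v⟫ := by
  induction m with
  | zero => intro v hv y; rfl
  | succ m ih =>
    intro v hv y
    rw [gseq_succ, sum_inner]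
    have h1 : ∀ j : Fin n, ⟪W j (gseq W i m (adjoint (W j) y)), v⟫
        = ⟪adjoint (W j) y, adjoint (W j) (adjoint (W i) v)⟫ := by
      intro j
      rw [← adjoint_inner_right (W j), ih (adjoint (W j) v) (adj_mem hv j),
        ← adjoint_inner_right (W i), comm_adj hv i j]
    rw [Finset.sum_congr rfl fun j _ => h1 j, inner_cuntz hcuntz,
      adjoint_inner_right]

include hisom hcuntz in
lemma inner_gseq_diag (i : Fin n) (m : ℕ) :
    ∀ x y : L, ⟪gseq W i m x, gseq W i m y⟫ = ⟪x, y⟫ := by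
  induction m with
  | zero =>
    intro x y
    rw [gseq_zero, gseq_zero, ← adjoint_inner_left (W i), adj_apply_W hisom i i]
    simp
  | succ m ih =>
    intro x y
    rw [gseq_succ, gseq_succ, sum_inner]
    have h1 : ∀ j : Fin n,
        ⟪W j (gseq W i m (adjoint (W j) x)), ∑ k, W k (gseq W i m (adjoint (W k) y))⟫
          = ⟪adjoint (W j) x, adjoint (W j) y⟫ := by
      intro j
      rw [inner_sum]
      have h2 : ∀ k : Fin n,
          ⟪W j (gseq W i m (adjoint (W j) x)), W k (gseq W i m (adjoint (W k) y))⟫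
            = if k = j then ⟪adjoint (W j) x, adjoint (W k) y⟫ else 0 := by
        intro k
        rw [← adjoint_inner_left (W k), adj_apply_W hisom k j]
        by_cases h : k = j
        · simp only [h, if_pos rfl]; exact ih _ _
        · simp [h]
      rw [Finset.sum_congr rfl fun k _ => h2 k, Finset.sum_ite_eq' univ j _]
      simp
    rw [Finset.sum_congr rfl fun j _ => h1 j, inner_cuntz hcuntz]

include hisom hcuntz in
lemma inner_gseq_offdiag (i : Fin n) (p : ℕ) :
    ∀ (q : ℕ) (x y : L), x ∈ commPieceSet W → y ∈ commPieceSet W → p < q →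
      ⟪gseq W i p x, gseq W i q y⟫ = ⟪adjoint (W i) x, adjoint (W i) y⟫ := by
  induction p with
  | zero =>
    intro q x y hx hy hq
    obtain ⟨q', rfl⟩ : ∃ q', q = q' + 1 := ⟨q - 1, by omega⟩
    rw [gseq_zero, gseq_succ, inner_sum]
    have h2 : ∀ k : Fin n, ⟪W i x, W k (gseq W i q' (adjoint (W k) y))⟫
        = if k = i then ⟪x, gseq W i q' (adjoint (W k) y)⟫ else 0 := by
      intro k
      rw [← adjoint_inner_left (W k), adj_apply_W hisom k i]
      by_cases h : k = i
      · simp [h]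
      · simp [h]
    rw [Finset.sum_congr rfl fun k _ => h2 k, Finset.sum_ite_eq' univ i _]
    simp only [mem_univ, if_pos]
    have h3 := inner_gseq_left hisom hcuntz i q' x hx (adjoint (W i) y)
    have h4 : ⟪x, gseq W i q' (adjoint (W i) y)⟫ = ⟪x, W i (adjoint (W i) y)⟫ := by
      have h5 := congrArg (starRingEnd ℂ) h3
      rwa [inner_conj_symm, inner_conj_symm] at h5
    rw [h4, ← adjoint_inner_left (W i)]
  | succ p ih =>
    intro q x y hx hy hq
    obtain ⟨q', rfl⟩ : ∃ q', q = q' + 1 := ⟨q - 1, by omega⟩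
    rw [gseq_succ, gseq_succ, sum_inner]
    have h1 : ∀ j : Fin n,
        ⟪W j (gseq W i p (adjoint (W j) x)), ∑ k, W k (gseq W i q' (adjoint (W k) y))⟫
          = ⟪adjoint (W j) (adjoint (W i) x), adjoint (W j) (adjoint (W i) y)⟫ := by
      intro j
      rw [inner_sum]
      have h2 : ∀ k : Fin n,
          ⟪W j (gseq W i p (adjoint (W j) x)), W k (gseq W i q' (adjoint (W k) y))⟫
            = if k = j then ⟪gseq W i p (adjoint (W j) x), gseq W i q' (adjoint (W k) y)⟫
              else 0 := by
        intro k
        rw [← adjoint_inner_left (W k), adj_apply_W hisom k j]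
        by_cases h : k = j
        · simp [h]
        · simp [h]
      rw [Finset.sum_congr rfl fun k _ => h2 k, Finset.sum_ite_eq' univ j _]
      simp only [mem_univ, if_pos]
      rw [ih q' (adjoint (W j) x) (adjoint (W j) y) (adj_mem hx j) (adj_mem hy j) (by omega),
        comm_adj hx, comm_adj hy]
    rw [Finset.sum_congr rfl fun j _ => h1 j, inner_cuntz hcuntz]

include hisom hcuntz in
lemma inner_gseq_pq (i : Fin n) (p q : ℕ) {x : L} (hx : x ∈ commPieceSet W) :
    ⟪gseq W i p x, gseq W i q x⟫
      = if p = q then ⟪x, x⟫ else ⟪adjoint (W i) x, adjoint (W i) x⟫ := by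
  rcases lt_trichotomy p q with h | h | h
  · rw [if_neg (by omega), inner_gseq_offdiag hisom hcuntz i p q x x hx hx h]
  · rw [if_pos h, h, inner_gseq_diag hisom hcuntz i q]
  · rw [if_neg (by omega)]
    have h3 := inner_gseq_offdiag hisom hcuntz i q p x x hx hx h
    have h5 := congrArg (starRingEnd ℂ) h3
    rwa [inner_conj_symm, inner_conj_symm] at h5


include hisom in
lemma adjoint_wordProd_gseq (i : Fin n) (α : List (Fin n)) :
    ∀ (m : ℕ) (y : L), α.length ≤ m →
      adjoint (wordProd W α) (gseq W i m y)
        = gseq W i (m - α.length) (adjoint (wordProd W α) y) := by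
  induction α with
  | nil => intro m y _; rw [adjoint_wordProd_nil, adjoint_wordProd_nil]; simp
  | cons a α ih =>
    intro m y hm
    simp only [List.length_cons] at hm ⊢
    obtain ⟨m', rfl⟩ : ∃ m', m = m' + 1 := ⟨m - 1, by omega⟩
    rw [← adjoint_wordProd_cons, ← adjoint_wordProd_cons, adj_gseq hisom,
      ih m' (adjoint (W a) y) (by omega)]
    have hnum : m' - α.length = m' + 1 - (α.length + 1) := by omega
    rw [hnum]

include hisom in
lemma gseq_comm_defect (i i' j' : Fin n) (α : List (Fin n)) {x : L}
    (hx : x ∈ commPieceSet W) (m : ℕ) (hm : α.length + 2 ≤ m) :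
    adjoint (W i') (adjoint (W j') (adjoint (wordProd W α) (gseq W i m x)))
      = adjoint (W j') (adjoint (W i') (adjoint (wordProd W α) (gseq W i m x))) := by
  rw [adjoint_wordProd_gseq hisom i α m x (by omega)]
  obtain ⟨m', hm'⟩ : ∃ m', m - α.length = m' + 1 + 1 := ⟨m - α.length - 2, by omega⟩
  rw [hm', adj_gseq hisom, adj_gseq hisom, adj_gseq hisom, adj_gseq hisom, hx i' j' α]

include hisom hcuntz in
lemma lemA (P : L →L[ℂ] L)
    (hP : ∀ x : L, P x ∈ commPieceSet W ∧
      ∀ y ∈ commPieceSet W, (inner ℂ (x - P x) y : ℂ) = 0)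
    (i : Fin n) {x : L} (hx : x ∈ commPieceSet W) :
    ⟪P (W i x), P (W i x)⟫ = ⟪adjoint (W i) x, adjoint (W i) x⟫ := by
  set a : ℂ := ⟪adjoint (W i) x, adjoint (W i) x⟫ with ha
  set b : ℂ := ⟪x, x⟫ with hb
  set T : ℕ → L := fun M => ∑ m ∈ Finset.range M, gseq W i m x with hT
  set hs : ℕ → L := fun M => ((M : ℂ))⁻¹ • T M with hhs
  have key : ∀ p q : ℕ, ⟪gseq W i p x, gseq W i q x⟫ = a + (if p = q then b - a else 0) := by
    intro p q
    rw [inner_gseq_pq hisom hcuntz i p q hx]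
    by_cases h : p = q
    · simp only [if_pos h]; ring
    · simp only [if_neg h]; ring
  have cTT : ∀ M N : ℕ, ⟪T M, T N⟫ = (M : ℂ) * (N : ℂ) * a + ((min M N : ℕ) : ℂ) * (b - a) := by
    intro M N
    simp only [hT]
    rw [sum_inner]
    have h1 : ∀ p ∈ Finset.range M,
        ⟪gseq W i p x, ∑ m ∈ Finset.range N, gseq W i m x⟫
          = (N : ℂ) * a + (if p ∈ Finset.range N then b - a else 0) := by
      intro p _
      rw [inner_sum, Finset.sum_congr rfl fun q _ => key p q, Finset.sum_add_distrib,
        Finset.sum_const, Finset.card_range, Finset.sum_ite_eq (Finset.range N) p _]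
      simp [nsmul_eq_mul]
    rw [Finset.sum_congr rfl h1, Finset.sum_add_distrib, Finset.sum_const, Finset.card_range]
    have h2 : ∑ p ∈ Finset.range M, (if p ∈ Finset.range N then b - a else 0)
        = ((min M N : ℕ) : ℂ) * (b - a) := by
      rw [Finset.sum_ite_mem]
      have h3 : Finset.range M ∩ Finset.range N = Finset.range (min M N) := by
        ext p; simp only [Finset.mem_inter, Finset.mem_range]; omega
      rw [h3, Finset.sum_const, Finset.card_range, nsmul_eq_mul]
    rw [h2]
    push_cast
    ring
  have chs : ∀ M N : ℕ, ⟪hs M, hs N⟫ = (M:ℂ)⁻¹ * (N:ℂ)⁻¹ * ⟪T M, T N⟫ := by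
    intro M N
    simp only [hhs]
    rw [inner_smul_left, inner_smul_right, map_inv₀, Complex.conj_natCast]
    ring
  have chh1 : ∀ M N : ℕ, 1 ≤ N → N ≤ M → ⟪hs M, hs N⟫ = a + (M:ℂ)⁻¹ * (b - a) := by
    intro M N h1 h2
    rw [chs, cTT]
    have hmin : min M N = N := by omega
    rw [hmin]
    have hM : (M:ℂ) ≠ 0 := Nat.cast_ne_zero.mpr (by omega)
    have hN : (N:ℂ) ≠ 0 := Nat.cast_ne_zero.mpr (by omega)
    field_simp
  have chh2 : ∀ M N : ℕ, 1 ≤ N → N ≤ M → ⟪hs N, hs M⟫ = a + (M:ℂ)⁻¹ * (b - a) := by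
    intro M N h1 h2
    rw [chs, cTT]
    have hmin : min N M = N := by omega
    rw [hmin]
    have hM : (M:ℂ) ≠ 0 := Nat.cast_ne_zero.mpr (by omega)
    have hN : (N:ℂ) ≠ 0 := Nat.cast_ne_zero.mpr (by omega)
    field_simp
  have hdd : ∀ M N : ℕ, 1 ≤ N → N ≤ M →
      ⟪hs M - hs N, hs M - hs N⟫ = ((N:ℂ)⁻¹ - (M:ℂ)⁻¹) * (b - a) := by
    intro M N h1 h2
    rw [inner_sub_left, inner_sub_right, inner_sub_right,
      chh1 M M (by omega) le_rfl, chh1 M N h1 h2, chh2 M N h1 h2, chh1 N N h1 le_rfl]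
    ring
  set ar : ℝ := ‖adjoint (W i) x‖^2 with har
  set br : ℝ := ‖x‖^2 with hbr
  have haC : a = ((ar : ℝ) : ℂ) := by
    rw [ha, inner_self_eq_norm_sq_to_K, har]; norm_cast
  have hbC : b = ((br : ℝ) : ℂ) := by
    rw [hb, inner_self_eq_norm_sq_to_K, hbr]; norm_cast
  have hsum : ∑ j : Fin n, ‖adjoint (W j) x‖^2 = br := by
    have h1 := inner_cuntz hcuntz x x
    have h2 := congrArg Complex.re h1
    rw [Complex.re_sum] at h2
    have h3 : ∀ j : Fin n, (⟪adjoint (W j) x, adjoint (W j) x⟫).re = ‖adjoint (W j) x‖^2 := by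
      intro j
      have h4 := inner_self_eq_norm_sq (𝕜 := ℂ) (adjoint (W j) x)
      simpa [RCLike.re_to_complex] using h4
    have h5 : (⟪x, x⟫ : ℂ).re = ‖x‖^2 := by
      have h4 := inner_self_eq_norm_sq (𝕜 := ℂ) x
      simpa [RCLike.re_to_complex] using h4
    rw [Finset.sum_congr rfl fun j _ => h3 j, h5] at h2
    rw [hbr]
    exact h2
  have har_le : ar ≤ br := by
    rw [← hsum, har]
    exact Finset.single_le_sum (f := fun j => ‖adjoint (W j) x‖^2)
      (fun j _ => sq_nonneg _) (Finset.mem_univ i)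
  have har0 : 0 ≤ ar := sq_nonneg _
  have hbr0 : 0 ≤ br := sq_nonneg _
  have hnorm : ∀ M N : ℕ, 1 ≤ N → N ≤ M →
      ‖hs M - hs N‖^2 = ((N:ℝ)⁻¹ - (M:ℝ)⁻¹) * (br - ar) := by
    intro M N h1 h2
    have h3 := hdd M N h1 h2
    have h4 : ⟪hs M - hs N, hs M - hs N⟫ = ((((N:ℝ)⁻¹ - (M:ℝ)⁻¹) * (br - ar) : ℝ) : ℂ) := by
      rw [h3, haC, hbC]; push_cast; ring
    have h5 : (⟪hs M - hs N, hs M - hs N⟫ : ℂ).re = ‖hs M - hs N‖^2 := by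
      have h6 := inner_self_eq_norm_sq (𝕜 := ℂ) (hs M - hs N)
      simpa [RCLike.re_to_complex] using h6
    rw [h4, Complex.ofReal_re] at h5
    exact h5.symm
  have hcauchy : CauchySeq hs := by
    rw [Metric.cauchySeq_iff']
    intro ε hε
    obtain ⟨K, hK⟩ := exists_nat_gt (br / ε^2)
    refine ⟨K + 1, fun M hM => ?_⟩
    have h1 : (1:ℕ) ≤ K + 1 := by omega
    have h2 := hnorm M (K+1) h1 hM
    have hNpos : (0:ℝ) < ((K+1:ℕ):ℝ) := by positivity
    have hMpos : (0:ℝ) ≤ ((M:ℕ):ℝ)⁻¹ := by positivity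
    have h5 : ‖hs M - hs (K+1)‖^2 ≤ (((K+1:ℕ)):ℝ)⁻¹ * br := by
      rw [h2]
      have e1 : ((K+1:ℕ):ℝ)⁻¹ - ((M:ℕ):ℝ)⁻¹ ≤ ((K+1:ℕ):ℝ)⁻¹ := by linarith
      have e2 : br - ar ≤ br := by linarith
      have e3 : (0:ℝ) ≤ br - ar := by linarith
      have e4 : (0:ℝ) ≤ ((K+1:ℕ):ℝ)⁻¹ - ((M:ℕ):ℝ)⁻¹ := by
        have : ((M:ℕ):ℝ)⁻¹ ≤ ((K+1:ℕ):ℝ)⁻¹ := by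
          apply inv_anti₀ hNpos
          exact_mod_cast hM
        linarith
      calc (((K+1:ℕ):ℝ)⁻¹ - ((M:ℕ):ℝ)⁻¹) * (br - ar) ≤ ((K+1:ℕ):ℝ)⁻¹ * (br - ar) :=
            mul_le_mul_of_nonneg_right e1 e3
        _ ≤ ((K+1:ℕ):ℝ)⁻¹ * br := by
            apply mul_le_mul_of_nonneg_left e2 (by positivity)
    have h6 : (((K+1:ℕ)):ℝ)⁻¹ * br < ε^2 := by
      rw [inv_mul_lt_iff₀ hNpos]
      have h7 : br < K * ε^2 := by
        have := (div_lt_iff₀ (by positivity : (0:ℝ) < ε^2)).mp hK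
        linarith
      have h8 : (K:ℝ) * ε^2 ≤ ((K+1:ℕ):ℝ) * ε^2 := by
        apply mul_le_mul_of_nonneg_right _ (by positivity)
        push_cast; linarith
      linarith
    rw [dist_eq_norm]
    have h9 : ‖hs M - hs (K+1)‖^2 < ε^2 := lt_of_le_of_lt h5 h6
    exact lt_of_pow_lt_pow_left₀ 2 hε.le h9
  obtain ⟨h, hlim⟩ := cauchySeq_tendsto_of_complete hcauchy
  have tinv : Tendsto (fun M : ℕ => ((M:ℂ))⁻¹) atTop (𝓝 0) := by
    have t1 : Tendsto (fun M : ℕ => Complex.ofReal ((M:ℝ)⁻¹)) atTop (𝓝 (Complex.ofReal (0:ℝ))) :=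
      (Complex.continuous_ofReal.tendsto 0).comp tendsto_inv_atTop_nhds_zero_nat
    simpa [Complex.ofReal_inv] using t1
  have hmemh : h ∈ commPieceSet W := by
    intro i' j' α
    set E : L →L[ℂ] L :=
      ((adjoint (W i')).comp ((adjoint (W j')).comp (adjoint (wordProd W α))))
        - ((adjoint (W j')).comp ((adjoint (W i')).comp (adjoint (wordProd W α)))) with hE
    have hEapp : ∀ v : L, E v = adjoint (W i') (adjoint (W j') (adjoint (wordProd W α) v))
        - adjoint (W j') (adjoint (W i') (adjoint (wordProd W α) v)) := fun v => rfl
    have hEg : ∀ m : ℕ, α.length + 2 ≤ m → E (gseq W i m x) = 0 := by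
      intro m hm
      rw [hEapp, gseq_comm_defect hisom i i' j' α hx m hm, sub_self]
    set c0 : L := ∑ m ∈ Finset.range (α.length + 2), E (gseq W i m x) with hc0
    have hEhs : ∀ M : ℕ, α.length + 2 ≤ M → E (hs M) = ((M:ℂ))⁻¹ • c0 := by
      intro M hM
      simp only [hhs, hT, map_smul, map_sum]
      congr 1
      rw [hc0]
      refine (Finset.sum_subset (Finset.range_subset_range.mpr hM) ?_).symm
      intro m hm1 hm2
      simp only [Finset.mem_range] at hm1 hm2
      exact hEg m (by omega)
    have t2 : Tendsto (fun M => E (hs M)) atTop (𝓝 (E h)) :=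
      (E.continuous.tendsto h).comp hlim
    have t4 : Tendsto (fun M => E (hs M)) atTop (𝓝 (0:L)) := by
      have t5 : Tendsto (fun M : ℕ => ((M:ℂ))⁻¹ • c0) atTop (𝓝 (0:L)) := by
        simpa using tinv.smul_const c0
      refine t5.congr' ?_
      filter_upwards [eventually_ge_atTop (α.length + 2)] with M hM
      exact (hEhs M hM).symm
    have hE0 : E h = 0 := tendsto_nhds_unique t2 t4
    rw [hEapp] at hE0
    exact sub_eq_zero.mp hE0
  have hval : ∀ v, v ∈ commPieceSet W → ⟪h, v⟫ = ⟪W i x, v⟫ := by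
    intro v hv
    have t6 : Tendsto (fun M => ⟪hs M, v⟫) atTop (𝓝 ⟪h, v⟫) :=
      hlim.inner tendsto_const_nhds
    have t7 : ∀ M : ℕ, 1 ≤ M → ⟪hs M, v⟫ = ⟪W i x, v⟫ := by
      intro M hM
      simp only [hhs, hT]
      rw [inner_smul_left, sum_inner,
        Finset.sum_congr rfl fun m _ => inner_gseq_left hisom hcuntz i m v hv x,
        Finset.sum_const, Finset.card_range, nsmul_eq_mul, map_inv₀, Complex.conj_natCast]
      have hM0 : (M:ℂ) ≠ 0 := Nat.cast_ne_zero.mpr (by omega)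
      field_simp
    have t8 : Tendsto (fun M : ℕ => ⟪hs M, v⟫) atTop (𝓝 ⟪W i x, v⟫) := by
      refine tendsto_const_nhds.congr' ?_
      filter_upwards [eventually_ge_atTop 1] with M hM
      exact (t7 M hM).symm
    exact tendsto_nhds_unique t6 t8
  have hu := (hP (W i x)).1
  have hPval : ∀ v, v ∈ commPieceSet W → ⟪P (W i x), v⟫ = ⟪W i x, v⟫ := by
    intro v hv
    have h9 := (hP (W i x)).2 v hv
    rw [inner_sub_left, sub_eq_zero] at h9
    exact h9.symm
  have hhu : h = P (W i x) := by
    have hd : h - P (W i x) ∈ commPieceSet W := sub_mem_C hmemh hu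
    have h10 : ⟪h - P (W i x), h - P (W i x)⟫ = 0 := by
      rw [inner_sub_left, hval _ hd, hPval _ hd, sub_self]
    exact sub_eq_zero.mp (inner_self_eq_zero.mp h10)
  have t9 : Tendsto (fun M => ⟪hs M, hs M⟫) atTop (𝓝 ⟪h, h⟫) := hlim.inner hlim
  have t10 : Tendsto (fun M : ℕ => ⟪hs M, hs M⟫) atTop (𝓝 a) := by
    have t11 : Tendsto (fun M : ℕ => a + ((M:ℂ))⁻¹ * (b - a)) atTop (𝓝 (a + 0 * (b - a))) :=
      tendsto_const_nhds.add (tinv.mul tendsto_const_nhds)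
    simp only [zero_mul, add_zero] at t11
    refine t11.congr' ?_
    filter_upwards [eventually_ge_atTop 1] with M hM
    exact (chh1 M M hM le_rfl).symm
  have hfin : ⟪h, h⟫ = a := tendsto_nhds_unique t9 t10
  rw [← hhu]
  exact hfin

include hisom hcuntz in
lemma lemB (P : L →L[ℂ] L)
    (hP : ∀ x : L, P x ∈ commPieceSet W ∧
      ∀ y ∈ commPieceSet W, (inner ℂ (x - P x) y : ℂ) = 0)
    (i : Fin n) {x y : L} (hx : x ∈ commPieceSet W) (hy : y ∈ commPieceSet W) :
    ⟪P (W i x), P (W i y)⟫ = ⟪adjoint (W i) x, adjoint (W i) y⟫ := by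
  have hdiag : ∀ z, z ∈ commPieceSet W →
      ⟪P (W i z), P (W i z)⟫ = ⟪adjoint (W i) z, adjoint (W i) z⟫ :=
    fun z hz => lemA hisom hcuntz P hP i hz
  have h1 := hdiag (x + y) (add_mem_C hx hy)
  have h2 := hdiag (x + Complex.I • y) (add_mem_C hx (smul_mem_C _ hy))
  have hxx := hdiag x hx
  have hyy := hdiag y hy
  simp only [map_add, map_smul, inner_add_add_self, inner_smul_left, inner_smul_right,
    Complex.conj_I, mul_neg, neg_mul, ← mul_assoc, Complex.I_mul_I, one_mul, neg_neg] at h1 h2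
  linear_combination h1/2 - Complex.I/2 * h2 + (Complex.I/2 - 1/2) * hxx
    + (Complex.I/2 - 1/2) * hyy
    + (⟪P (W i x), P (W i y)⟫ - ⟪adjoint (W i) x, adjoint (W i) y⟫
        + ⟪adjoint (W i) y, adjoint (W i) x⟫ - ⟪P (W i y), P (W i x)⟫)/2 * Complex.I_mul_I

end G

end Stmt12Aux

/-- for a Cuntz tuple `W` on `L` with `L^c(W) ≠ {0}`, the compressions
`W_i^c = P W_i|_{L^c(W)}` (where `P` is the orthogonal projection onto `L^c(W)`)
form a spherical unitary: `Σ_i W_i^c (W_i^c)^* = I`, each `W_i^c` is normal, and the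
compressions commute. -/
theorem stmt12 {n : ℕ} (hn : 2 ≤ n) {L : Type*} [NormedAddCommGroup L]
    [InnerProductSpace ℂ L] [CompleteSpace L]
    (W : Fin n → L →L[ℂ] L)
    (hisom : ∀ i j : Fin n, adjoint (W i) ∘L W j = if i = j then 1 else 0)
    (hcuntz : ∑ i : Fin n, W i ∘L adjoint (W i) = 1)
    (hne : commPieceSet W ≠ {0})
    (P : L →L[ℂ] L)
    (hP : ∀ x : L, P x ∈ commPieceSet W ∧
      ∀ y ∈ commPieceSet W, (inner ℂ (x - P x) y : ℂ) = 0) :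
    (∀ x ∈ commPieceSet W, ∑ i : Fin n, P (W i (adjoint (W i) x)) = x) ∧
    (∀ i : Fin n, ∀ x ∈ commPieceSet W,
      P (W i (adjoint (W i) x)) = adjoint (W i) (P (W i x))) ∧
    (∀ i j : Fin n, ∀ x ∈ commPieceSet W,
      P (W i (P (W j x))) = P (W j (P (W i x)))) := by

  have Pmem : ∀ z : L, P z ∈ commPieceSet W := fun z => (hP z).1
  have hPval : ∀ z : L, ∀ v ∈ commPieceSet W, (inner ℂ (P z) v : ℂ) = inner ℂ z v := by
    intro z v hv
    have h9 := (hP z).2 v hv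
    rw [inner_sub_left, sub_eq_zero] at h9
    exact h9.symm
  have hPval' : ∀ z : L, ∀ v ∈ commPieceSet W, (inner ℂ v (P z) : ℂ) = inner ℂ v z := by
    intro z v hv
    have h8 := congrArg (starRingEnd ℂ) (hPval z v hv)
    rwa [inner_conj_symm, inner_conj_symm] at h8
  have hPfix : ∀ x ∈ commPieceSet W, P x = x := by
    intro x hx
    have hd : x - P x ∈ commPieceSet W := Stmt12Aux.sub_mem_C hx (Pmem x)
    have h0 := (hP x).2 (x - P x) hd
    exact (sub_eq_zero.mp (inner_self_eq_zero.mp h0)).symm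
  have eqC : ∀ d e : L, d ∈ commPieceSet W → e ∈ commPieceSet W →
      (∀ v ∈ commPieceSet W, (inner ℂ v d : ℂ) = inner ℂ v e) → d = e := by
    intro d e hd he hval
    have h1 : (inner ℂ (d - e) (d - e) : ℂ) = 0 := by
      rw [inner_sub_right, hval (d - e) (Stmt12Aux.sub_mem_C hd he), sub_self]
    exact sub_eq_zero.mp (inner_self_eq_zero.mp h1)
  refine ⟨?_, ?_, ?_⟩
  · intro x hx
    have h1 : ∑ i : Fin n, P (W i (adjoint (W i) x)) = P (∑ i : Fin n, W i (adjoint (W i) x)) :=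
      (map_sum P _ _).symm
    rw [h1, Stmt12Aux.cuntz_apply hcuntz x]
    exact hPfix x hx
  · intro i x hx
    apply eqC _ _ (Pmem _) (Stmt12Aux.adj_mem (Pmem (W i x)) i)
    intro v hv
    have lhs : (inner ℂ v (P (W i (adjoint (W i) x))) : ℂ)
        = inner ℂ (adjoint (W i) v) (adjoint (W i) x) := by
      rw [hPval' _ v hv, ← adjoint_inner_left]
    have rhs : (inner ℂ v (adjoint (W i) (P (W i x))) : ℂ)
        = inner ℂ (adjoint (W i) v) (adjoint (W i) x) := by
      rw [adjoint_inner_right]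
      have h2 : (inner ℂ (W i v) (P (W i x)) : ℂ) = inner ℂ (P (W i v)) (P (W i x)) :=
        (hPval (W i v) (P (W i x)) (Pmem (W i x))).symm
      rw [h2, Stmt12Aux.lemB hisom hcuntz P hP i hv hx]
    rw [lhs, rhs]
  · intro i j x hx
    apply eqC _ _ (Pmem _) (Pmem _)
    intro v hv
    have key : ∀ (i' j' : Fin n), (inner ℂ v (P (W i' (P (W j' x)))) : ℂ)
        = inner ℂ (adjoint (W j') (adjoint (W i') v)) x := by
      intro i' j'
      rw [hPval' _ v hv, ← adjoint_inner_left,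
        hPval' _ (adjoint (W i') v) (Stmt12Aux.adj_mem hv i'), ← adjoint_inner_left]
    rw [key i j, key j i, Stmt12Aux.comm_adj hv j i]
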